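/- Let d ≥ 1 and let f be a nonzero harmonic binary d-form. Then the Waring rank of f equals d: there exist real numbers λ₁,…,λ_d and pairwise non-proportional real linear forms L₁,…,L_d with f = Σ_{i=1}^d λᵢ Lᵢ^d, and no such decomposition exists with fewer than d summands. -/

import Mathlib

open MvPolynomial Finset

/-- The Laplacian `∂x² + ∂y²` applied to a binary polynomial. -/
noncomputable def lap (f : MvPolynomial (Fin 2) ℝ) : MvPolynomial (Fin 2) ℝ :=
  pderiv 0 (pderiv 0 f) + pderiv 1 (pderiv 1 f)

/-- Apply the constant-coefficient differential operator encoded by the polynomial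
`g ∈ ℝ[∂x,∂y]` (with `∂x = X 0`, `∂y = X 1`) to the polynomial `f`. -/
noncomputable def diffOp (g f : MvPolynomial (Fin 2) ℝ) : MvPolynomial (Fin 2) ℝ :=
  (AddMonoidAlgebra.coeff g).sum fun m c =>
    c • ((fun p => pderiv (0 : Fin 2) p)^[m 0] ((fun p => pderiv (1 : Fin 2) p)^[m 1] f))

/-- The harmonic form `h_{d,0} = Σ_j (−1)^j C(d,2j) x^(d−2j) y^(2j)`. -/
noncomputable def h0 (d : ℕ) : MvPolynomial (Fin 2) ℝ :=
  ∑ j ∈ Finset.range (d / 2 + 1),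
    C ((-1 : ℝ) ^ j * (d.choose (2 * j) : ℝ)) * X 0 ^ (d - 2 * j) * X 1 ^ (2 * j)

/-- The harmonic form `h_{d,1} = Σ_j (−1)^j C(d,2j+1) x^(d−2j−1) y^(2j+1)`. -/
noncomputable def h1 (d : ℕ) : MvPolynomial (Fin 2) ℝ :=
  ∑ j ∈ Finset.range ((d - 1) / 2 + 1),
    C ((-1 : ℝ) ^ j * (d.choose (2 * j + 1) : ℝ)) * X 0 ^ (d - (2 * j + 1)) * X 1 ^ (2 * j + 1)

/-- `f` is a sum of `r` real multiples of `d`-th powers of real linear forms. -/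
def IsWaringDecomp (d r : ℕ) (f : MvPolynomial (Fin 2) ℝ) : Prop :=
  ∃ (lam a b : Fin r → ℝ), f = ∑ i, lam i • (C (a i) * X 0 + C (b i) * X 1) ^ d

/-- The (real) Waring rank of `f` as a binary `d`-form: the smallest positive `r`
admitting a Waring decomposition of length `r`. -/
noncomputable def waringRank (d : ℕ) (f : MvPolynomial (Fin 2) ℝ) : ℕ :=
  sInf {r : ℕ | 0 < r ∧ IsWaringDecomp d r f}

open Complex

section AuxHarmonic

noncomputable def lapC (f : MvPolynomial (Fin 2) ℂ) : MvPolynomial (Fin 2) ℂ :=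
  pderiv 0 (pderiv 0 f) + pderiv 1 (pderiv 1 f)

lemma coeff_pderiv {R : Type*} [CommSemiring R] (i : Fin 2) (f : MvPolynomial (Fin 2) R)
    (m : Fin 2 →₀ ℕ) :
    coeff m (pderiv i f) = (m i + 1) * coeff (m + Finsupp.single i 1) f := by
  induction f using MvPolynomial.induction_on' with
  | monomial s a =>
    rw [pderiv_monomial, coeff_monomial, coeff_monomial]
    by_cases hs : s i = 0
    · have h1 : s - Finsupp.single i 1 = s := by
        ext j; rcases eq_or_ne j i with rfl | hj
        · simp [hs]
        · simp [Finsupp.single_apply, hj.symm, Ne.symm hj]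
      have h2 : s ≠ m + Finsupp.single i 1 := by
        intro h; apply absurd hs; rw [h]; simp
      rw [h1, if_neg h2, mul_zero]
      split_ifs with h
      · subst h; rw [mul_comm, hs, Nat.cast_zero, zero_mul]
      · rfl
    · have key : s - Finsupp.single i 1 = m ↔ s = m + Finsupp.single i 1 := by
        constructor
        · rintro rfl
          ext j; rcases eq_or_ne j i with rfl | hj
          · simp; omega
          · simp [Finsupp.single_apply, hj.symm, Ne.symm hj]
        · rintro rfl; ext j; rcases eq_or_ne j i with rfl | hj
          · simp
          · simp [Finsupp.single_apply, hj.symm, Ne.symm hj]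
      by_cases h : s = m + Finsupp.single i 1
      · rw [if_pos (key.2 h), if_pos h, h]
        simp [mul_comm]
      · rw [if_neg (fun hh => h (key.1 hh)), if_neg h, mul_zero]
  | add p q hp hq => simp [hp, hq, mul_add]

lemma coeff_lapC (f : MvPolynomial (Fin 2) ℂ) (m : Fin 2 →₀ ℕ) :
    coeff m (lapC f) = (m 0 + 1) * (m 0 + 2) * coeff (m + Finsupp.single 0 2) f
      + (m 1 + 1) * (m 1 + 2) * coeff (m + Finsupp.single 1 2) f := by
  have e0 : (Finsupp.single (0:Fin 2) 2) = Finsupp.single 0 1 + Finsupp.single 0 1 := by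
    rw [← Finsupp.single_add]
  have e1 : (Finsupp.single (1:Fin 2) 2) = Finsupp.single 1 1 + Finsupp.single 1 1 := by
    rw [← Finsupp.single_add]
  rw [lapC, coeff_add, _root_.coeff_pderiv, _root_.coeff_pderiv, _root_.coeff_pderiv, _root_.coeff_pderiv]
  simp only [Finsupp.add_apply, Finsupp.single_apply, if_pos rfl]
  rw [add_assoc m, add_assoc m, e0, e1]
  push_cast
  ring

lemma lapC_map (f : MvPolynomial (Fin 2) ℝ) :
    lapC (map (algebraMap ℝ ℂ) f) = map (algebraMap ℝ ℂ) (lap f) := by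
  simp [lapC, lap, pderiv_map]

noncomputable def mono (d j : ℕ) : Fin 2 →₀ ℕ := Finsupp.single 0 (d - j) + Finsupp.single 1 j

lemma degree_fin2 (m : Fin 2 →₀ ℕ) : Finsupp.degree m = m 0 + m 1 := by
  rw [Finsupp.degree_apply]
  rw [Finset.sum_subset (Finset.subset_univ m.support)]
  · rw [show (Finset.univ : Finset (Fin 2)) = {0, 1} by rfl]
    simp
  · intro x _ hx
    simpa using Finsupp.notMem_support_iff.mp hx

lemma term_eq (c : ℂ) (k j n : ℕ) :
    X 0 ^ k * (C c * X 1) ^ j * (n : MvPolynomial (Fin 2) ℂ)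
      = monomial (Finsupp.single 0 k + Finsupp.single 1 j) (c ^ j * n) := by
  rw [mul_pow, ← C_pow, X_pow_eq_monomial, X_pow_eq_monomial,
    ← C_eq_coe_nat, C_apply, C_apply]
  rw [show (monomial (Finsupp.single (0:Fin 2) k)) (1:ℂ) * (monomial 0 (c^j) * monomial (Finsupp.single 1 j) 1) * monomial 0 (n:ℂ) = monomial (Finsupp.single (0:Fin 2) k) (1:ℂ) * monomial 0 (c^j) * monomial (Finsupp.single 1 j) 1 * monomial 0 (n:ℂ) by ring]
  rw [monomial_mul, monomial_mul, monomial_mul]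
  congr 1
  · ext i; simp
  · ring

lemma LC_expand (c : ℂ) (d : ℕ) :
    ((X 0 + C c * X 1) ^ d : MvPolynomial (Fin 2) ℂ)
      = ∑ k ∈ Finset.range (d + 1),
          monomial (Finsupp.single 0 k + Finsupp.single 1 (d - k)) (c ^ (d - k) * (d.choose k)) := by
  rw [add_pow]
  exact Finset.sum_congr rfl fun k _ => term_eq c k (d - k) (d.choose k)

lemma coeff_LC (c : ℂ) (d j : ℕ) (hj : j ≤ d) :
    coeff (mono d j) ((X 0 + C c * X 1) ^ d) = c ^ j * d.choose j := by
  rw [LC_expand, coeff_sum]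
  rw [Finset.sum_eq_single (d - j)]
  · rw [coeff_monomial, if_pos, Nat.sub_sub_self hj, Nat.choose_symm hj]
    rw [mono, Nat.sub_sub_self hj]
  · intro k hk hne
    rw [coeff_monomial, if_neg]
    intro h
    apply hne
    have := DFunLike.congr_fun h 0
    simp [mono, Finsupp.single_apply] at this
    omega
  · intro h
    simp at h

lemma hom_LC (c : ℂ) (d : ℕ) : ((X 0 + C c * X 1 : MvPolynomial (Fin 2) ℂ) ^ d).IsHomogeneous d := by
  simpa using (((isHomogeneous_X ℂ 0).add ((isHomogeneous_X ℂ 1).C_mul c)).pow d)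

lemma lapC_LC (c : ℂ) (h : c * c = -1) (d : ℕ) : lapC ((X 0 + C c * X 1) ^ d) = 0 := by
  have p0 : pderiv (0 : Fin 2) (X 0 + C c * X 1) = 1 := by simp
  have p1 : pderiv (1 : Fin 2) (X 0 + C c * X 1) = C c := by simp
  rw [lapC, pderiv_pow, p0, pderiv_pow, p1]
  rw [mul_one]
  rw [show ((d : MvPolynomial (Fin 2) ℂ) * (X 0 + C c * X 1) ^ (d-1) * C c) = C c * ((d : MvPolynomial (Fin 2) ℂ) * (X 0 + C c * X 1) ^ (d-1)) by ring]
  rw [pderiv_C_mul]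
  have : pderiv (0:Fin 2) ((d : MvPolynomial (Fin 2) ℂ) * (X 0 + C c * X 1) ^ (d-1))
      = (d : MvPolynomial (Fin 2) ℂ) * (((d-1 : ℕ) : MvPolynomial (Fin 2) ℂ) * (X 0 + C c * X 1) ^ (d-1-1)) := by
    rw [← C_eq_coe_nat, pderiv_C_mul, pderiv_pow, p0, C_eq_coe_nat, mul_one]
  have this1 : pderiv (1:Fin 2) ((d : MvPolynomial (Fin 2) ℂ) * (X 0 + C c * X 1) ^ (d-1))
      = (d : MvPolynomial (Fin 2) ℂ) * (((d-1 : ℕ) : MvPolynomial (Fin 2) ℂ) * (X 0 + C c * X 1) ^ (d-1-1) * C c) := by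
    rw [← C_eq_coe_nat, pderiv_C_mul, pderiv_pow, p1, C_eq_coe_nat]
  rw [this, this1]
  have hc : C c * C c = (-1 : MvPolynomial (Fin 2) ℂ) := by
    rw [← C_mul, h]; simp
  linear_combination ((d : MvPolynomial (Fin 2) ℂ) * ((d-1 : ℕ) : MvPolynomial (Fin 2) ℂ) * (X 0 + C c * X 1) ^ (d-1-1)) * hc

lemma mono_apply0 (d j : ℕ) : mono d j 0 = d - j := by simp [mono]
lemma mono_apply1 (d j : ℕ) : mono d j 1 = j := by simp [mono]

lemma lapC_add (f g : MvPolynomial (Fin 2) ℂ) : lapC (f + g) = lapC f + lapC g := by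
  simp [lapC]; ring

lemma lapC_C_mul (c : ℂ) (f : MvPolynomial (Fin 2) ℂ) : lapC (C c * f) = C c * lapC f := by
  simp [lapC, pderiv_C_mul]; ring

lemma vanish (d : ℕ) (F : MvPolynomial (Fin 2) ℂ) (hhom : F.IsHomogeneous d)
    (hlap : lapC F = 0) (hc0 : coeff (mono d 0) F = 0) (hc1 : coeff (mono d 1) F = 0) :
    F = 0 := by
  have key : ∀ j, j ≤ d → coeff (mono d j) F = 0 := by
    intro j
    induction j using Nat.strong_induction_on with
    | _ j ih =>
      intro hj
      match j, ih with
      | 0, _ => exact hc0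
      | 1, _ => exact hc1
      | (j+2), ih =>
        have hm : coeff (Finsupp.single 0 (d - (j+2)) + Finsupp.single 1 j) (lapC F) = 0 := by
          rw [hlap, coeff_zero]
        rw [coeff_lapC] at hm
        have e1 : (Finsupp.single (0 : Fin 2) (d - (j+2)) + Finsupp.single 1 j)
            + Finsupp.single 0 2 = mono d j := by
          ext i
          fin_cases i <;> simp [mono, Finsupp.single_apply] <;> omega
        have e2 : (Finsupp.single (0 : Fin 2) (d - (j+2)) + Finsupp.single 1 j)
            + Finsupp.single 1 2 = mono d (j+2) := by
          ext i
          fin_cases i <;> simp [mono, Finsupp.single_apply]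
        have happ : ((Finsupp.single (0:Fin 2) (d - (j+2)) + Finsupp.single 1 j) : Fin 2 →₀ ℕ) 1 = j := by
          simp [Finsupp.single_apply]
        rw [e1, e2, happ, ih j (by omega) (by omega), mul_zero, zero_add] at hm
        have h1 : ((j:ℂ) + 1) ≠ 0 := by
          have e : ((j:ℂ) + 1) = ((j+1 : ℕ) : ℂ) := by push_cast; ring
          rw [e]; exact Nat.cast_ne_zero.mpr (Nat.succ_ne_zero j)
        have h2 : ((j:ℂ) + 2) ≠ 0 := by
          have e : ((j:ℂ) + 2) = ((j+2 : ℕ) : ℂ) := by push_cast; ring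
          rw [e]; exact Nat.cast_ne_zero.mpr (by omega)
        rcases mul_eq_zero.mp hm with h | h
        · exact absurd h (mul_ne_zero h1 h2)
        · exact h
  ext m
  rw [coeff_zero]
  by_cases hdeg : m 0 + m 1 = d
  · have : m = mono d (m 1) := by
      ext i; fin_cases i <;> simp [mono, Finsupp.single_apply] <;> omega
    rw [this]
    exact key (m 1) (by omega)
  · exact hhom.coeff_eq_zero (by rw [degree_fin2 m]; exact hdeg)

lemma structureC (d : ℕ) (hd : 0 < d) (F : MvPolynomial (Fin 2) ℂ) (hhom : F.IsHomogeneous d)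
    (hlap : lapC F = 0) :
    F = C ((coeff (mono d 0) F - I * coeff (mono d 1) F / d) / 2) * (X 0 + C I * X 1) ^ d
      + C ((coeff (mono d 0) F + I * coeff (mono d 1) F / d) / 2) * (X 0 + C (-I) * X 1) ^ d := by
  set A := (coeff (mono d 0) F - I * coeff (mono d 1) F / d) / 2 with hA
  set B := (coeff (mono d 0) F + I * coeff (mono d 1) F / d) / 2 with hB
  have hd' : (d : ℂ) ≠ 0 := Nat.cast_ne_zero.mpr hd.ne'
  have key : F - (C A * (X 0 + C I * X 1) ^ d + C B * (X 0 + C (-I) * X 1) ^ d) = 0 := by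
    apply vanish d
    · exact (hhom.sub (((hom_LC I d).C_mul A).add ((hom_LC (-I) d).C_mul B)))
    · have lapC_sub : ∀ f g : MvPolynomial (Fin 2) ℂ, lapC (f - g) = lapC f - lapC g := by
        intro f g; simp [lapC]; ring
      rw [lapC_sub, hlap, lapC_add, lapC_C_mul, lapC_C_mul, lapC_LC I (by simp [I_mul_I]) d,
        lapC_LC (-I) (by simp [I_mul_I]) d]
      simp
    · rw [coeff_sub, coeff_add, coeff_C_mul, coeff_C_mul, coeff_LC I d 0 (by omega),
        coeff_LC (-I) d 0 (by omega)]
      simp [hA, hB]; ring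
    · rw [coeff_sub, coeff_add, coeff_C_mul, coeff_C_mul, coeff_LC I d 1 hd,
        coeff_LC (-I) d 1 hd, hA, hB]
      field_simp
      simp only [Nat.choose_one_right]
      linear_combination (2 * coeff (mono d 1) F * (d:ℂ)) * I_sq
  linear_combination key

noncomputable def Dop (a b : ℝ) (P : MvPolynomial (Fin 2) ℂ) : MvPolynomial (Fin 2) ℂ :=
  C (b : ℂ) * pderiv 0 P - C (a : ℂ) * pderiv 1 P

noncomputable def applyL : List (ℝ × ℝ) → MvPolynomial (Fin 2) ℂ → MvPolynomial (Fin 2) ℂ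
  | [], P => P
  | p :: t, P => Dop p.1 p.2 (applyL t P)

lemma Dop_add (a b : ℝ) (P Q : MvPolynomial (Fin 2) ℂ) :
    Dop a b (P + Q) = Dop a b P + Dop a b Q := by simp [Dop]; ring

lemma Dop_C_mul (a b : ℝ) (c : ℂ) (P : MvPolynomial (Fin 2) ℂ) :
    Dop a b (C c * P) = C c * Dop a b P := by simp [Dop, pderiv_C_mul]; ring

lemma Dop_zero (a b : ℝ) : Dop a b 0 = 0 := by simp [Dop]

lemma applyL_add (l : List (ℝ × ℝ)) (P Q : MvPolynomial (Fin 2) ℂ) :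
    applyL l (P + Q) = applyL l P + applyL l Q := by
  induction l with
  | nil => rfl
  | cons p t ih => simp [applyL, ih, Dop_add]

lemma applyL_C_mul (l : List (ℝ × ℝ)) (c : ℂ) (P : MvPolynomial (Fin 2) ℂ) :
    applyL l (C c * P) = C c * applyL l P := by
  induction l with
  | nil => rfl
  | cons p t ih => simp [applyL, ih, Dop_C_mul]

lemma applyL_zero (l : List (ℝ × ℝ)) : applyL l 0 = 0 := by
  induction l with
  | nil => rfl
  | cons p t ih => simp [applyL, ih, Dop_zero]

lemma applyL_sum {ι : Type*} (l : List (ℝ × ℝ)) (s : Finset ι) (g : ι → MvPolynomial (Fin 2) ℂ) :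
    applyL l (∑ i ∈ s, g i) = ∑ i ∈ s, applyL l (g i) := by
  classical
  induction s using Finset.induction_on with
  | empty => simpa using applyL_zero l
  | insert _ _ hs ih => rw [Finset.sum_insert hs, Finset.sum_insert hs, applyL_add, ih]

lemma Dop_linpow (a b : ℝ) (u v : ℂ) (n : ℕ) :
    Dop a b ((C u * X 0 + C v * X 1) ^ n)
      = C (((b : ℂ) * u - (a : ℂ) * v) * n) * (C u * X 0 + C v * X 1) ^ (n - 1) := by
  have pd0 : pderiv (0 : Fin 2) (C u * X 0 + C v * X 1) = C u := by simp
  have pd1 : pderiv (1 : Fin 2) (C u * X 0 + C v * X 1) = C v := by simp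
  rw [Dop, pderiv_pow, pderiv_pow, pd0, pd1, ← C_eq_coe_nat]
  rw [C_mul, C_sub, C_mul, C_mul]
  ring

lemma applyL_linpow (l : List (ℝ × ℝ)) (u v : ℂ) (n : ℕ) (h : l.length ≤ n) :
    applyL l ((C u * X 0 + C v * X 1) ^ n)
      = C ((l.map fun p => (p.2 : ℂ) * u - (p.1 : ℂ) * v).prod
            * ∏ j ∈ Finset.range l.length, ((n : ℂ) - j))
          * (C u * X 0 + C v * X 1) ^ (n - l.length) := by
  induction l with
  | nil => simp [applyL]
  | cons p t ih =>
    have ht : t.length ≤ n := le_trans (by simp) h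
    rw [applyL, ih ht, Dop_C_mul, Dop_linpow]
    rw [← mul_assoc, ← C_mul]
    have hcast : ((n - t.length : ℕ) : ℂ) = (n : ℂ) - t.length := by
      rw [Nat.cast_sub ht]
    rw [hcast]
    have hexp : n - t.length - 1 = n - (p :: t).length := by simp; omega
    rw [hexp]
    simp only [List.map_cons, List.prod_cons, List.length_cons, Finset.prod_range_succ]
    congr 1
    exact congrArg C (by ring)

lemma applyL_kill (l : List (ℝ × ℝ)) (a b : ℝ) (hmem : (a, b) ∈ l) (n : ℕ) (h : l.length ≤ n) :
    applyL l ((C (a : ℂ) * X 0 + C (b : ℂ) * X 1) ^ n) = 0 := by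
  rw [applyL_linpow l _ _ n h]
  have hz : ((l.map fun p => (p.2 : ℂ) * (a : ℂ) - (p.1 : ℂ) * (b : ℂ)).prod : ℂ) = 0 := by
    apply List.prod_eq_zero
    exact List.mem_map.mpr ⟨(a, b), hmem, by ring⟩
  rw [hz, zero_mul, map_zero, zero_mul]

lemma real_pair_zero {x y : ℝ} (h : (x : ℂ) + (y : ℂ) * I = 0) : x = 0 ∧ y = 0 := by
  have hre := congrArg Complex.re h
  have him := congrArg Complex.im h
  simp at hre him
  exact ⟨hre, him⟩

lemma applyL_const_ne (l : List (ℝ × ℝ)) (hl : ∀ p ∈ l, p ≠ (0, 0)) (c : ℂ)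
    (hc : c = I ∨ c = -I) (n : ℕ) (h : l.length ≤ n) :
    (l.map fun p => (p.2 : ℂ) * 1 - (p.1 : ℂ) * c).prod
      * ∏ j ∈ Finset.range l.length, ((n : ℂ) - j) ≠ 0 := by
  apply mul_ne_zero
  · apply List.prod_ne_zero
    intro h0
    obtain ⟨p, hp, hp0⟩ := List.mem_map.mp h0
    apply hl p hp
    have key : p.2 = 0 ∧ p.1 = 0 := by
      rcases hc with rfl | rfl
      · have h2 : ((p.2 : ℝ) : ℂ) + ((-p.1 : ℝ) : ℂ) * I = 0 := by
          push_cast; linear_combination hp0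
        obtain ⟨ha, hb⟩ := real_pair_zero h2
        exact ⟨ha, by linarith⟩
      · have h2 : ((p.2 : ℝ) : ℂ) + ((p.1 : ℝ) : ℂ) * I = 0 := by
          push_cast; linear_combination hp0
        obtain ⟨ha, hb⟩ := real_pair_zero h2
        exact ⟨ha, hb⟩
    rw [Prod.ext_iff]
    exact ⟨key.2, key.1⟩
  · apply Finset.prod_ne_zero_iff.mpr
    intro j hj
    rw [Finset.mem_range] at hj
    have hne : (j : ℂ) ≠ (n : ℂ) := by
      intro hcst; exact absurd (Nat.cast_injective hcst) (by omega)
    intro hcst; exact hne (by linear_combination -hcst)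

lemma lower_bound_aux (d r : ℕ) (hd : 0 < d) (hr : r < d) (γ δ : ℂ) (hγ : γ ≠ 0)
    (lam a b : Fin r → ℝ)
    (heq : (∑ i, C (lam i : ℂ) * (C (a i : ℂ) * X 0 + C (b i : ℂ) * X 1) ^ d)
        = (C γ * (X 0 + C I * X 1) ^ d + C δ * (X 0 + C (-I) * X 1) ^ d
            : MvPolynomial (Fin 2) ℂ)) : False := by
  classical
  set S := Finset.univ.filter (fun i : Fin r => (a i, b i) ≠ (0, 0)) with hS
  set l := S.toList.map (fun i => (a i, b i)) with hl
  have hlen : l.length ≤ r := by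
    rw [hl, List.length_map, Finset.length_toList]
    calc S.card ≤ (Finset.univ : Finset (Fin r)).card := Finset.card_le_card (Finset.filter_subset _ _)
    _ = r := by simp
  have hlend : l.length ≤ d := le_trans hlen hr.le
  have hmem_l : ∀ p ∈ l, p ≠ (0, 0) := by
    intro p hp
    obtain ⟨i, hi, rfl⟩ := List.mem_map.mp hp
    exact (Finset.mem_filter.mp (Finset.mem_toList.mp hi)).2
  -- apply the operator to the LHS
  have hL : applyL l (∑ i, C (lam i : ℂ) * (C (a i : ℂ) * X 0 + C (b i : ℂ) * X 1) ^ d) = 0 := by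
    rw [applyL_sum]
    apply Finset.sum_eq_zero
    intro i _
    rw [applyL_C_mul]
    by_cases hi : (a i, b i) = (0, 0)
    · rw [Prod.mk.injEq] at hi
      obtain ⟨h1, h2⟩ := hi
      simp [h1, h2, zero_pow hd.ne', applyL_zero]
    · have hmem : (a i, b i) ∈ l := by
        rw [hl]
        exact List.mem_map.mpr ⟨i, Finset.mem_toList.mpr (Finset.mem_filter.mpr ⟨Finset.mem_univ i, hi⟩), rfl⟩
      rw [applyL_kill l _ _ hmem d hlend, mul_zero]
  set m := d - l.length with hm
  have hm0 : 0 < m := by omega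
  have hmd : m ≤ d := by omega
  -- apply the operator to the RHS
  have hZ : (X 0 + C I * X 1 : MvPolynomial (Fin 2) ℂ) = C 1 * X 0 + C I * X 1 := by
    rw [map_one, one_mul]
  have hW : (X 0 + C (-I) * X 1 : MvPolynomial (Fin 2) ℂ) = C 1 * X 0 + C (-I) * X 1 := by
    rw [map_one, one_mul]
  set cZ := (l.map fun p => (p.2 : ℂ) * 1 - (p.1 : ℂ) * I).prod
      * ∏ j ∈ Finset.range l.length, ((d : ℂ) - j) with hcZ
  set cW := (l.map fun p => (p.2 : ℂ) * 1 - (p.1 : ℂ) * (-I)).prod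
      * ∏ j ∈ Finset.range l.length, ((d : ℂ) - j) with hcW
  have hcZ0 : cZ ≠ 0 := applyL_const_ne l hmem_l I (Or.inl rfl) d hlend
  have hR : applyL l (C γ * (X 0 + C I * X 1) ^ d + C δ * (X 0 + C (-I) * X 1) ^ d)
      = C (γ * cZ) * (X 0 + C I * X 1) ^ m + C (δ * cW) * (X 0 + C (-I) * X 1) ^ m := by
    rw [applyL_add, applyL_C_mul, applyL_C_mul, hZ, hW,
      applyL_linpow l 1 I d hlend, applyL_linpow l 1 (-I) d hlend]
    simp only [hcZ, hcW, hm, C_mul]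
    ring
  have hL' := congrArg (applyL l) heq
  rw [hL, hR] at hL'
  -- extract coefficients
  have h0 := congrArg (coeff (mono m 0)) hL'.symm
  have h1 := congrArg (coeff (mono m 1)) hL'.symm
  rw [coeff_add, coeff_C_mul, coeff_C_mul, coeff_LC I m 0 (by omega),
    coeff_LC (-I) m 0 (by omega), coeff_zero] at h0
  rw [coeff_add, coeff_C_mul, coeff_C_mul, coeff_LC I m 1 (by omega),
    coeff_LC (-I) m 1 (by omega), coeff_zero] at h1
  simp only [pow_zero, pow_one, Nat.choose_zero_right, Nat.choose_one_right, Nat.cast_one,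
    mul_one] at h0 h1
  have hmC : (m : ℂ) ≠ 0 := Nat.cast_ne_zero.mpr hm0.ne'
  have hfin : γ * cZ = 0 := by
    have hsum : γ * cZ * (I * m) + δ * cW * (-I * m) = 0 := h1
    have hrel : δ * cW = -(γ * cZ) := by linear_combination h0
    rw [hrel] at hsum
    have : γ * cZ * (2 * I * m) = 0 := by linear_combination hsum
    rcases mul_eq_zero.mp this with h | h
    · exact h
    · exact absurd h (by simp [hmC, I_ne_zero])
  exact absurd hfin (mul_ne_zero hγ hcZ0)

noncomputable def E (t : ℝ) : ℂ := Complex.exp (t * I)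

lemma E_add (s t : ℝ) : E (s + t) = E s * E t := by
  rw [E, E, E, ← Complex.exp_add]; push_cast; ring_nf

lemma E_zero : E 0 = 1 := by simp [E]

lemma E_pow (t : ℝ) (n : ℕ) : E t ^ n = E (n * t) := by
  rw [E, E, ← Complex.exp_nat_mul]; push_cast; ring_nf

lemma E_ne (t : ℝ) : E t ≠ 0 := Complex.exp_ne_zero _

lemma E_mul_neg (t : ℝ) : E t * E (-t) = 1 := by rw [← E_add]; simp [E_zero]

lemma E_pi_nat (k : ℕ) : E (k * Real.pi) = (-1) ^ k := by
  rw [E, show ((k * Real.pi : ℝ) : ℂ) * I = k * (Real.pi * I) by push_cast; ring,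
    Complex.exp_nat_mul, Complex.exp_pi_mul_I]

lemma conj_E (t : ℝ) : (starRingEnd ℂ) (E t) = E (-t) := by
  rw [E, E, ← Complex.exp_conj]
  congr 1
  simp [Complex.ext_iff]

lemma geom_zero (d : ℕ) (β s : ℝ) (hne : E s ≠ 1) (hpow : E s ^ d = 1) :
    ∑ k ∈ Finset.range d, E (β + k * s) = 0 := by
  have h : ∀ k ∈ Finset.range d, E (β + k * s) = E β * E s ^ k := by
    intro k _; rw [E_add, E_pow]
  rw [Finset.sum_congr rfl h, ← Finset.mul_sum, geom_sum_eq hne, hpow]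
  simp

lemma E_int_ne_one (d : ℕ) (hd : 0 < d) (c : ℤ) (hc0 : 0 < c) (hcd : c < d)
    (s : ℝ) (hs : s * d = 2 * Real.pi * c) : E s ≠ 1 := by
  intro h
  rw [E, Complex.exp_eq_one_iff] at h
  obtain ⟨n, hn⟩ := h
  have hI : (s : ℂ) = n * (2 * Real.pi) := by
    have h2 : (s : ℂ) * I = (n * (2 * Real.pi)) * I := by rw [hn]; ring
    exact mul_right_cancel₀ Complex.I_ne_zero h2
  have hr : s = n * (2 * Real.pi) := by exact_mod_cast hI
  have hpi := Real.pi_pos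
  have key : (c : ℝ) = n * d := by
    have hd' : (d : ℝ) ≠ 0 := Nat.cast_ne_zero.mpr hd.ne'
    have := congrArg (· * (d : ℝ)) hr
    rw [hs] at this
    have h3 : 2 * Real.pi * c = 2 * Real.pi * (n * d) := by linarith [this]
    exact mul_left_cancel₀ (by positivity) h3
  have kint : (c : ℤ) = n * d := by exact_mod_cast key
  rcases le_or_gt n 0 with h | h
  · nlinarith [kint, hc0, (Nat.cast_pos (α := ℤ)).mpr hd]
  · have : 1 ≤ n := h
    nlinarith [kint, hcd, (Nat.cast_pos (α := ℤ)).mpr hd]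

lemma E_ne_one (d : ℕ) (hd : 0 < d) (c : ℤ) (hc : ¬ ((d : ℤ) ∣ c)) (s : ℝ)
    (hs : s * d = 2 * Real.pi * c) : E s ≠ 1 := by
  intro h
  rw [E, Complex.exp_eq_one_iff] at h
  obtain ⟨n, hn⟩ := h
  have hI : (s : ℂ) = n * (2 * Real.pi) := by
    have h2 : (s : ℂ) * I = (n * (2 * Real.pi)) * I := by rw [hn]; ring
    exact mul_right_cancel₀ Complex.I_ne_zero h2
  have hr : s = n * (2 * Real.pi) := by exact_mod_cast hI
  have hpi := Real.pi_pos
  have hd' : (d : ℝ) ≠ 0 := Nat.cast_ne_zero.mpr hd.ne'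
  have key : (c : ℝ) = n * d := by
    have h3 : s * d = (n * (2 * Real.pi)) * d := by rw [hr]
    rw [hs] at h3
    have h4 : 2 * Real.pi * c = 2 * Real.pi * (n * d) := by linarith
    exact mul_left_cancel₀ (by positivity) h4
  have kint : c = n * d := by exact_mod_cast key
  exact hc ⟨n, by linarith [kint]⟩

lemma E_pi_nat_neg (k : ℕ) : E (-(k * Real.pi)) = (-1) ^ k := by
  have h := E_mul_neg (k * Real.pi)
  rw [E_pi_nat] at h
  have h2 : ((-1 : ℂ) ^ k) * ((-1 : ℂ) ^ k) = 1 := by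
    rw [← pow_add]; exact Even.neg_one_pow ⟨k, rfl⟩
  calc E (-(k * Real.pi)) = ((-1 : ℂ) ^ k * (-1 : ℂ) ^ k) * E (-(k * Real.pi)) := by
        rw [h2, one_mul]
    _ = (-1 : ℂ) ^ k * ((-1 : ℂ) ^ k * E (-(k * Real.pi))) := by ring
    _ = (-1 : ℂ) ^ k := by rw [h, mul_one]

noncomputable def theta (g : ℝ) (d k : ℕ) : ℝ := (-g + k * Real.pi) / d

lemma not_dvd_small (d : ℕ) (c : ℤ) (h0 : c ≠ 0) (hlb : -(d : ℤ) < c) (hub : c < d) :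
    ¬ ((d : ℤ) ∣ c) := by
  rintro ⟨m, rfl⟩
  have hdz : (0 : ℤ) < d := by
    rcases lt_trichotomy ((d : ℤ)) 0 with h | h | h
    · exfalso; omega
    · omega
    · exact h
  rcases lt_trichotomy m 0 with h | rfl | h
  · nlinarith
  · simp at h0
  · nlinarith

lemma upper (d : ℕ) (hd : 0 < d) (γ : ℂ) (hγ : γ ≠ 0) :
    (C γ * (X 0 + C I * X 1) ^ d + C ((starRingEnd ℂ) γ) * (X 0 + C (-I) * X 1) ^ d
      : MvPolynomial (Fin 2) ℂ)
    = ∑ k ∈ Finset.range d,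
        C ((1 / d * ‖γ‖ * (-1) ^ k : ℝ) : ℂ)
          * (C ((2 * Real.cos (theta γ.arg d k) : ℝ) : ℂ) * X 0
              + C ((2 * Real.sin (theta γ.arg d k) : ℝ) : ℂ) * X 1) ^ d := by
  have hdR : (d : ℝ) ≠ 0 := Nat.cast_ne_zero.mpr hd.ne'
  have hdC : (d : ℂ) ≠ 0 := Nat.cast_ne_zero.mpr hd.ne'
  set θ : ℕ → ℝ := fun k => theta γ.arg d k with hθ
  have hdθ : ∀ k : ℕ, (d : ℝ) * θ k = -γ.arg + k * Real.pi := by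
    intro k; rw [hθ]; simp only [theta]; field_simp
  have hgamma : (‖γ‖ : ℂ) * E γ.arg = γ := by
    rw [E]; exact Complex.norm_mul_exp_arg_mul_I γ
  have hconj : (‖γ‖ : ℂ) * E (-γ.arg) = (starRingEnd ℂ) γ := by
    have := congrArg (starRingEnd ℂ) hgamma
    rwa [map_mul, Complex.conj_ofReal, conj_E] at this
  set P : MvPolynomial (Fin 2) ℂ := X 0 + C I * X 1 with hP
  set Q : MvPolynomial (Fin 2) ℂ := X 0 + C (-I) * X 1 with hQ
  set xk : ℕ → ℂ := fun k => E (-(θ k)) with hxk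
  set yk : ℕ → ℂ := fun k => E (θ k) with hyk
  set lamk : ℕ → ℂ := fun k => ((1 / d * ‖γ‖ * (-1) ^ k : ℝ) : ℂ) with hlamk
  show C γ * P ^ d + C ((starRingEnd ℂ) γ) * Q ^ d
    = ∑ k ∈ Finset.range d, C (lamk k)
        * (C ((2 * Real.cos (θ k) : ℝ) : ℂ) * X 0 + C ((2 * Real.sin (θ k) : ℝ) : ℂ) * X 1) ^ d
  -- step 1
  have step1 : ∀ k : ℕ,
      (C ((2 * Real.cos (θ k) : ℝ) : ℂ) * X 0 + C ((2 * Real.sin (θ k) : ℝ) : ℂ) * X 1 :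
        MvPolynomial (Fin 2) ℂ)
      = C (xk k) * P + C (yk k) * Q := by
    intro k
    have ha : ((2 * Real.cos (θ k) : ℝ) : ℂ) = xk k + yk k := by
      rw [Complex.ofReal_mul, Complex.ofReal_cos, Complex.cos, hxk, hyk]
      simp only [E]
      push_cast
      ring
    have hb : ((2 * Real.sin (θ k) : ℝ) : ℂ) = (xk k - yk k) * I := by
      rw [Complex.ofReal_mul, Complex.ofReal_sin, Complex.sin, hxk, hyk]
      simp only [E]
      push_cast
      ring
    rw [ha, hb, hP, hQ, map_add, map_mul, map_sub, map_neg]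
    ring
  -- step 2
  have step2 : ∀ k : ℕ,
      (C (xk k) * P + C (yk k) * Q) ^ d
      = ∑ j ∈ Finset.range (d + 1),
          C (xk k ^ j * yk k ^ (d - j) * (d.choose j)) * (P ^ j * Q ^ (d - j)) := by
    intro k
    rw [add_pow]
    refine Finset.sum_congr rfl fun j _ => ?_
    rw [mul_pow, mul_pow, ← C_eq_coe_nat, C_mul, C_mul, ← C_pow, ← C_pow]
    ring
  -- per-term identity
  have hterm : ∀ j : ℕ, j ≤ d → ∀ k : ℕ,
      lamk k * (xk k ^ j * yk k ^ (d - j))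
      = (1 / (2 * (d : ℂ))) * (γ * E (2 * ((d : ℝ) - j) * θ k)
          + (starRingEnd ℂ) γ * E (-(2 * (j : ℝ)) * θ k)) := by
    intro j hj k
    have hlam' : ((‖γ‖ : ℝ) : ℂ) * (-1) ^ k
        = (γ * E ((d : ℝ) * θ k) + (starRingEnd ℂ) γ * E (-((d : ℝ) * θ k))) / 2 := by
      rw [hdθ k, show -(-γ.arg + (k : ℝ) * Real.pi) = γ.arg + -((k : ℝ) * Real.pi) by ring,
        E_add, E_add, E_pi_nat, E_pi_nat_neg]
      have hgE : γ * E (-γ.arg) = (‖γ‖ : ℂ) := by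
        nth_rewrite 1 [← hgamma]
        rw [mul_assoc, E_mul_neg, mul_one]
      have h1 : γ * (E (-γ.arg) * (-1 : ℂ) ^ k) = (‖γ‖ : ℂ) * (-1) ^ k := by
        rw [← hgE]; ring
      have h2 : (starRingEnd ℂ) γ * (E γ.arg * (-1 : ℂ) ^ k)
          = (‖γ‖ : ℂ) * (-1) ^ k := by
        have hc2 : (starRingEnd ℂ) γ * E γ.arg = (‖γ‖ : ℂ) := by
          rw [← hconj]
          calc (‖γ‖ : ℂ) * E (-γ.arg) * E γ.arg
              = (‖γ‖ : ℂ) * (E γ.arg * E (-γ.arg)) := by ring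
            _ = (‖γ‖ : ℂ) := by rw [E_mul_neg, mul_one]
        rw [← hc2]; ring
      rw [h1, h2]; ring
    have hEE : E ((d : ℝ) * θ k) * (E ((j : ℝ) * -θ k) * E (((d : ℝ) - j) * θ k))
        = E (2 * ((d : ℝ) - j) * θ k) := by
      rw [← E_add, ← E_add]; congr 1; ring
    have hEE2 : E (-((d : ℝ) * θ k)) * (E ((j : ℝ) * -θ k) * E (((d : ℝ) - j) * θ k))
        = E (-(2 * (j : ℝ)) * θ k) := by
      rw [← E_add, ← E_add]; congr 1; ring
    rw [hxk, hyk, hlamk]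
    simp only []
    rw [E_pow, E_pow, Nat.cast_sub hj]
    rw [show ((1 / (d : ℝ) * ‖γ‖ * (-1) ^ k : ℝ) : ℂ)
        = 1 / (d : ℂ) * ((‖γ‖ : ℝ) : ℂ) * (-1) ^ k by push_cast; ring]
    linear_combination (E ((j : ℝ) * -θ k) * E (((d : ℝ) - (j : ℝ)) * θ k) / (d : ℂ)) * hlam'
      + (γ / (2 * (d : ℂ))) * hEE + ((starRingEnd ℂ) γ / (2 * (d : ℂ))) * hEE2
  -- middle sums vanish
  have hmid : ∀ j : ℕ, 0 < j → j < d →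
      ∑ k ∈ Finset.range d, lamk k * (xk k ^ j * yk k ^ (d - j)) = 0 := by
    intro j hj0 hjd
    have hrw : ∀ k ∈ Finset.range d, lamk k * (xk k ^ j * yk k ^ (d - j))
        = (γ / (2 * (d : ℂ)))
            * E (2 * ((d : ℝ) - j) * (-γ.arg) / d + k * (2 * ((d : ℝ) - j) * Real.pi / d))
          + ((starRingEnd ℂ) γ / (2 * (d : ℂ)))
            * E (-(2 * (j : ℝ)) * (-γ.arg) / d + k * (-(2 * (j : ℝ)) * Real.pi / d)) := by
      intro k _
      rw [hterm j hjd.le k]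
      have e1 : 2 * ((d : ℝ) - j) * θ k
          = 2 * ((d : ℝ) - j) * (-γ.arg) / d + k * (2 * ((d : ℝ) - j) * Real.pi / d) := by
        rw [hθ]; simp only [theta]; field_simp
      have e2 : -(2 * (j : ℝ)) * θ k
          = -(2 * (j : ℝ)) * (-γ.arg) / d + k * (-(2 * (j : ℝ)) * Real.pi / d) := by
        rw [hθ]; simp only [theta]; field_simp; ring
      rw [e1, e2]; ring
    rw [Finset.sum_congr rfl hrw, Finset.sum_add_distrib, ← Finset.mul_sum, ← Finset.mul_sum]
    have G1 : ∑ k ∈ Finset.range d,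
        E (2 * ((d : ℝ) - j) * (-γ.arg) / d + k * (2 * ((d : ℝ) - j) * Real.pi / d)) = 0 := by
      apply geom_zero
      · apply E_ne_one d hd ((d : ℤ) - j)
        · apply not_dvd_small d ((d : ℤ) - j)
          · have : (j : ℤ) < d := by exact_mod_cast hjd
            omega
          · have : (0 : ℤ) ≤ (j : ℤ) := Int.ofNat_nonneg j
            have hdz : (0 : ℤ) < d := by exact_mod_cast hd
            omega
          · have : (0 : ℤ) < (j : ℤ) := by exact_mod_cast hj0
            omega
        · push_cast
          field_simp
      · rw [E_pow]
        rw [show (d : ℝ) * (2 * ((d : ℝ) - j) * Real.pi / d) = ((d : ℝ) - j) * (2 * Real.pi) by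
          field_simp]
        rw [E, Complex.exp_eq_one_iff]
        exact ⟨(d : ℤ) - j, by push_cast; ring⟩
    have G2 : ∑ k ∈ Finset.range d,
        E (-(2 * (j : ℝ)) * (-γ.arg) / d + k * (-(2 * (j : ℝ)) * Real.pi / d)) = 0 := by
      apply geom_zero
      · apply E_ne_one d hd (-(j : ℤ))
        · apply not_dvd_small d (-(j : ℤ))
          · have : (0 : ℤ) < (j : ℤ) := by exact_mod_cast hj0
            omega
          · have : (j : ℤ) < d := by exact_mod_cast hjd
            omega
          · have hdz : (0 : ℤ) < d := by exact_mod_cast hd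
            have : (0 : ℤ) < (j : ℤ) := by exact_mod_cast hj0
            omega
        · push_cast
          field_simp
      · rw [E_pow]
        rw [show (d : ℝ) * (-(2 * (j : ℝ)) * Real.pi / d) = -(j : ℝ) * (2 * Real.pi) by
          field_simp]
        rw [E, Complex.exp_eq_one_iff]
        exact ⟨-(j : ℤ), by push_cast; ring⟩
    rw [G1, G2, mul_zero, mul_zero, add_zero]
  -- inner sum at j = 0
  have hj0sum : ∑ k ∈ Finset.range d, lamk k * (xk k ^ 0 * yk k ^ (d - 0))
      = (starRingEnd ℂ) γ := by
    have hk : ∀ k ∈ Finset.range d, lamk k * (xk k ^ 0 * yk k ^ (d - 0))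
        = (starRingEnd ℂ) γ / d := by
      intro k _
      rw [pow_zero, one_mul, Nat.sub_zero, hyk, hlamk]
      simp only []
      rw [E_pow, hdθ k, E_add, E_pi_nat]
      rw [show ((1 / (d : ℝ) * ‖γ‖ * (-1) ^ k : ℝ) : ℂ)
          = 1 / (d : ℂ) * ((‖γ‖ : ℝ) : ℂ) * (-1) ^ k by push_cast; ring]
      have h2k : ((-1 : ℂ)) ^ k * (-1) ^ k = 1 := by
        rw [← pow_add]; exact Even.neg_one_pow ⟨k, rfl⟩
      linear_combination (((‖γ‖ : ℝ) : ℂ) * E (-γ.arg) / (d : ℂ)) * h2k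
        + (1 / (d : ℂ)) * hconj
    rw [Finset.sum_congr rfl hk, Finset.sum_const, Finset.card_range, nsmul_eq_mul,
      mul_div_cancel₀ _ hdC]
  -- inner sum at j = d
  have hjdsum : ∑ k ∈ Finset.range d, lamk k * (xk k ^ d * yk k ^ (d - d)) = γ := by
    have hk : ∀ k ∈ Finset.range d, lamk k * (xk k ^ d * yk k ^ (d - d)) = γ / d := by
      intro k _
      rw [Nat.sub_self, pow_zero, mul_one, hxk, hlamk]
      simp only []
      rw [E_pow]
      rw [show (d : ℝ) * -θ k = γ.arg + -((k : ℝ) * Real.pi) by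
        have := hdθ k; linarith]
      rw [E_add, E_pi_nat_neg]
      rw [show ((1 / (d : ℝ) * ‖γ‖ * (-1) ^ k : ℝ) : ℂ)
          = 1 / (d : ℂ) * ((‖γ‖ : ℝ) : ℂ) * (-1) ^ k by push_cast; ring]
      have h2k : ((-1 : ℂ)) ^ k * (-1) ^ k = 1 := by
        rw [← pow_add]; exact Even.neg_one_pow ⟨k, rfl⟩
      linear_combination (((‖γ‖ : ℝ) : ℂ) * E γ.arg / (d : ℂ)) * h2k
        + (1 / (d : ℂ)) * hgamma
    rw [Finset.sum_congr rfl hk, Finset.sum_const, Finset.card_range, nsmul_eq_mul,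
      mul_div_cancel₀ _ hdC]
  -- assembly
  have main : ∑ k ∈ Finset.range d, C (lamk k)
        * (C ((2 * Real.cos (θ k) : ℝ) : ℂ) * X 0 + C ((2 * Real.sin (θ k) : ℝ) : ℂ) * X 1) ^ d
      = ∑ j ∈ Finset.range (d + 1),
          C (∑ k ∈ Finset.range d, lamk k * (xk k ^ j * yk k ^ (d - j)))
            * (C ((d.choose j : ℂ)) * (P ^ j * Q ^ (d - j))) := by
    have h1 : ∀ k ∈ Finset.range d, C (lamk k)
        * (C ((2 * Real.cos (θ k) : ℝ) : ℂ) * X 0 + C ((2 * Real.sin (θ k) : ℝ) : ℂ) * X 1) ^ d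
        = ∑ j ∈ Finset.range (d + 1),
            C (lamk k * (xk k ^ j * yk k ^ (d - j))) * (C ((d.choose j : ℂ)) * (P ^ j * Q ^ (d - j))) := by
      intro k _
      rw [step1 k, step2 k, Finset.mul_sum]
      refine Finset.sum_congr rfl fun j _ => ?_
      simp only [C_mul]
      ring
    rw [Finset.sum_congr rfl h1, Finset.sum_comm]
    refine Finset.sum_congr rfl fun j _ => ?_
    rw [← Finset.sum_mul, ← map_sum]
  rw [main]
  have hsub : ({0, d} : Finset ℕ) ⊆ Finset.range (d + 1) := by
    intro x hx
    rcases Finset.mem_insert.mp hx with rfl | hx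
    · exact Finset.mem_range.mpr (by omega)
    · rw [Finset.mem_singleton] at hx; exact Finset.mem_range.mpr (by omega)
  rw [← Finset.sum_subset hsub (by
    intro j hj hj2
    have hj' : 0 < j ∧ j < d := by
      rw [Finset.mem_range] at hj
      simp only [Finset.mem_insert, Finset.mem_singleton] at hj2
      push_neg at hj2
      omega
    rw [hmid j hj'.1 hj'.2, map_zero, zero_mul])]
  rw [Finset.sum_pair hd.ne]
  rw [hj0sum, hjdsum, Nat.choose_zero_right, Nat.choose_self]
  simp only [pow_zero, one_mul, Nat.sub_zero, Nat.sub_self, Nat.cast_one, map_one, mul_one]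
  ring


lemma map_decomp (d r : ℕ) (lam a b : Fin r → ℝ) :
    map (algebraMap ℝ ℂ)
        (∑ i, lam i • (C (a i) * X 0 + C (b i) * X 1) ^ d : MvPolynomial (Fin 2) ℝ)
    = (∑ i, C ((lam i : ℂ)) * (C ((a i : ℂ)) * X 0 + C ((b i : ℂ)) * X 1) ^ d
        : MvPolynomial (Fin 2) ℂ) := by
  rw [map_sum]
  refine Finset.sum_congr rfl fun i _ => ?_
  rw [smul_eq_C_mul]
  simp only [map_mul, map_pow, map_add, MvPolynomial.map_C, MvPolynomial.map_X]
  norm_num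

end AuxHarmonic

/-- the Waring rank of a nonzero harmonic binary `d`-form equals `d`:
there is a decomposition into `d` pairwise non-proportional `d`-th powers, and no
decomposition with fewer than `d` summands exists. -/
theorem harmonic_waring_rank_eq_degree
    (d : ℕ) (hd : 0 < d) (f : MvPolynomial (Fin 2) ℝ)
    (hf : f.IsHomogeneous d) (hf0 : f ≠ 0) (hharm : lap f = 0) :
    (∃ lam a b : Fin d → ℝ,
      (∀ i j, i ≠ j → a i * b j - a j * b i ≠ 0) ∧
      f = ∑ i, lam i • (C (a i) * X 0 + C (b i) * X 1) ^ d) ∧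
    (¬ ∃ r : ℕ, r < d ∧ IsWaringDecomp d r f) ∧
    waringRank d f = d := by
  classical
  have hinj : Function.Injective
      (map (algebraMap ℝ ℂ) : MvPolynomial (Fin 2) ℝ → MvPolynomial (Fin 2) ℂ) :=
    MvPolynomial.map_injective _ (algebraMap ℝ ℂ).injective
  set F : MvPolynomial (Fin 2) ℂ := map (algebraMap ℝ ℂ) f with hF
  have hFhom : F.IsHomogeneous d := hf.map _
  have hFlap : lapC F = 0 := by rw [hF, lapC_map, hharm, map_zero]
  have hFne : F ≠ 0 := by
    rw [hF]; intro h; exact hf0 (hinj (by rw [h, map_zero]))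
  set p : ℝ := coeff (mono d 0) f with hpdef
  set q : ℝ := coeff (mono d 1) f with hqdef
  have hc0 : coeff (mono d 0) F = (p : ℂ) := by rw [hF, coeff_map]; rfl
  have hc1 : coeff (mono d 1) F = (q : ℂ) := by rw [hF, coeff_map]; rfl
  have hdC : (d : ℂ) ≠ 0 := Nat.cast_ne_zero.mpr hd.ne'
  have hdR : (d : ℝ) ≠ 0 := Nat.cast_ne_zero.mpr hd.ne'
  set A : ℂ := ((p : ℂ) - I * q / d) / 2 with hA
  have hconjA : ((p : ℂ) + I * q / d) / 2 = (starRingEnd ℂ) A := by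
    rw [hA]
    simp only [map_div₀, map_sub, map_mul, Complex.conj_ofReal, Complex.conj_I, map_natCast,
      map_ofNat]
    ring
  have hstruct : F = C A * (X 0 + C I * X 1) ^ d
      + C ((starRingEnd ℂ) A) * (X 0 + C (-I) * X 1) ^ d := by
    have h := structureC d hd F hFhom hFlap
    rw [hc0, hc1, hconjA, ← hA] at h
    exact h
  have hA0 : A ≠ 0 := by
    intro h0
    have h2 : ((p : ℝ) : ℂ) + ((-(q / d) : ℝ) : ℂ) * I = 0 := by
      push_cast
      rw [hA] at h0
      linear_combination 2 * h0
    obtain ⟨hp0, hq0⟩ := real_pair_zero h2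
    have hq0' : q = 0 := by
      have : q / d = 0 := by linarith
      field_simp at this
      simpa [hdR] using this
    exact hFne (vanish d F hFhom hFlap (by rw [hc0, hp0]; norm_num)
      (by rw [hc1, hq0']; norm_num))
  -- Part 1: the explicit decomposition
  have hdecomp : f = ∑ i : Fin d,
      (1 / (d : ℝ) * ‖A‖ * (-1) ^ (i : ℕ)) •
        (C (2 * Real.cos (theta A.arg d (i : ℕ))) * X 0
          + C (2 * Real.sin (theta A.arg d (i : ℕ))) * X 1) ^ d := by
    apply hinj
    rw [map_decomp, ← hF, hstruct, upper d hd A hA0]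
    rw [← Fin.sum_univ_eq_sum_range (fun k =>
      C ((1 / (d : ℝ) * ‖A‖ * (-1) ^ k : ℝ) : ℂ)
        * (C ((2 * Real.cos (theta A.arg d k) : ℝ) : ℂ) * X 0
            + C ((2 * Real.sin (theta A.arg d k) : ℝ) : ℂ) * X 1) ^ d) d]
  have hprop : ∀ i j : Fin d, i ≠ j →
      (2 * Real.cos (theta A.arg d (i : ℕ))) * (2 * Real.sin (theta A.arg d (j : ℕ)))
        - (2 * Real.cos (theta A.arg d (j : ℕ))) * (2 * Real.sin (theta A.arg d (i : ℕ)))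
          ≠ 0 := by
    intro i j hij h0
    have hsin : Real.sin (theta A.arg d (j : ℕ) - theta A.arg d (i : ℕ)) = 0 := by
      rw [Real.sin_sub]
      nlinarith [h0]
    have hdiff : theta A.arg d (j : ℕ) - theta A.arg d (i : ℕ)
        = (((j : ℕ) : ℝ) - ((i : ℕ) : ℝ)) * Real.pi / d := by
      simp only [theta]
      field_simp
      ring
    rw [hdiff] at hsin
    obtain ⟨n, hn⟩ := Real.sin_eq_zero_iff.mp hsin
    have hπ := Real.pi_ne_zero
    have h5 : (n : ℝ) * d = ((j : ℕ) : ℝ) - ((i : ℕ) : ℝ) := by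
      have h4 : (n : ℝ) * Real.pi * d = ((((j : ℕ) : ℝ) - ((i : ℕ) : ℝ)) * Real.pi / d) * d := by
        rw [hn]
      rw [div_mul_cancel₀ _ hdR] at h4
      have h6 : ((n : ℝ) * d) * Real.pi = (((j : ℕ) : ℝ) - ((i : ℕ) : ℝ)) * Real.pi := by
        linarith [h4]
      exact mul_right_cancel₀ hπ h6
    have hzint : (n : ℤ) * d = ((j : ℕ) : ℤ) - ((i : ℕ) : ℤ) := by exact_mod_cast h5
    have hij' : ((j : ℕ) : ℤ) ≠ ((i : ℕ) : ℤ) := by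
      intro h
      exact hij (Fin.ext (by exact_mod_cast h.symm))
    have hjd : ((j : ℕ) : ℤ) < d := by exact_mod_cast j.isLt
    have hid : ((i : ℕ) : ℤ) < d := by exact_mod_cast i.isLt
    have hj0 : (0 : ℤ) ≤ ((j : ℕ) : ℤ) := Int.ofNat_nonneg _
    have hi0 : (0 : ℤ) ≤ ((i : ℕ) : ℤ) := Int.ofNat_nonneg _
    have hdz : (0 : ℤ) < d := by exact_mod_cast hd
    rcases lt_trichotomy n 0 with h | rfl | h
    · nlinarith
    · simp at hzint; omega
    · nlinarith
  -- Part 2: no smaller decomposition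
  have hno : ¬ ∃ r : ℕ, r < d ∧ IsWaringDecomp d r f := by
    rintro ⟨r, hrd, lam, a, b, heq⟩
    refine lower_bound_aux d r hd hrd A ((starRingEnd ℂ) A) hA0 lam a b ?_
    have h2 := congrArg (map (algebraMap ℝ ℂ)) heq
    rw [map_decomp] at h2
    rw [← h2, ← hF]
    exact hstruct
  have hmem : d ∈ {r : ℕ | 0 < r ∧ IsWaringDecomp d r f} :=
    ⟨hd, _, _, _, hdecomp⟩
  refine ⟨⟨_, _, _, hprop, hdecomp⟩, hno, ?_⟩
  refine le_antisymm (Nat.sInf_le hmem) (le_csInf ⟨d, hmem⟩ fun r hr => ?_)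
  by_contra hlt
  push_neg at hlt
  exact hno ⟨r, hlt, hr.2⟩
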